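/- Let M be a real 2n×2n matrix and suppose there exist Γ > 0 and γ ∈ (0,1) with ‖M^k - Π‖ ≤ Γγ^k for all k, where Π = [[ (1/n)𝟙𝟙ᵀ, (1/n)𝟙𝟙ᵀ ], [0, 0]]. Let Z(k+1) = M Z(k) - α_k g(k) with ‖g(k)‖ ≤ D and α_k → 0, α_k nonincreasing. Then for each block index i in the lower half (n+1 ≤ i ≤ 2n), the i-th block z_i(k) of Z(k) converges to 0, provided the i-th block row of Π is zero and the i-th block of g has norm ≤ α_k^{-1/4}·α_k ≤ α_k^{3/4}. -/

import Mathlib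

open Filter Finset

private lemma aux_conv (γ : ℝ) (hγ : 0 < γ) (hγ1 : γ < 1) (α : ℕ → ℝ)
    (hαpos : ∀ k, 0 < α k) (hαmono : ∀ k, α (k + 1) ≤ α k)
    (hα0 : Tendsto α atTop (nhds 0)) :
    Tendsto (fun k => ∑ r ∈ Finset.Icc 1 k, γ ^ (k - r) * α (r - 1)) atTop (nhds 0) := by
  have hanti : ∀ r, α r ≤ α 0 := fun r => (antitone_nat_of_succ_le hαmono) (Nat.zero_le r)
  have h1γ : 0 < 1 - γ := by linarith
  rw [Metric.tendsto_atTop]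
  intro ε hε
  obtain ⟨N₀, hN₀⟩ := (Metric.tendsto_atTop.mp hα0) (ε * (1 - γ) / 4) (by positivity)
  have hαsmall : ∀ r, N₀ ≤ r → α r ≤ ε * (1 - γ) / 4 := by
    intro r hr
    have := hN₀ r hr
    rw [Real.dist_eq, sub_zero, abs_of_pos (hαpos r)] at this
    exact this.le
  have hge : Tendsto (fun m => (N₀ * α 0) * γ ^ m) atTop (nhds 0) := by
    simpa using (tendsto_pow_atTop_nhds_zero_of_lt_one hγ.le hγ1).const_mul ((N₀ : ℝ) * α 0)
  obtain ⟨N₁, hN₁⟩ := (Metric.tendsto_atTop.mp hge) (ε / 4) (by positivity)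
  refine ⟨N₀ + N₁, fun k hk => ?_⟩
  have hN₀k : N₀ ≤ k := le_trans (Nat.le_add_right _ _) hk
  have hterm_nonneg : ∀ r : ℕ, 0 ≤ γ ^ (k - r) * α (r - 1) := fun r =>
    mul_nonneg (pow_nonneg hγ.le _) (hαpos _).le
  have hT_nonneg : 0 ≤ ∑ r ∈ Finset.Icc 1 k, γ ^ (k - r) * α (r - 1) :=
    Finset.sum_nonneg fun r _ => hterm_nonneg r
  rw [Real.dist_eq, sub_zero, abs_of_nonneg hT_nonneg]
  have hsplit : ∑ r ∈ Finset.Ioc 0 N₀, γ ^ (k - r) * α (r - 1) +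
      ∑ r ∈ Finset.Ioc N₀ k, γ ^ (k - r) * α (r - 1)
      = ∑ r ∈ Finset.Icc 1 k, γ ^ (k - r) * α (r - 1) := by
    have he : Finset.Icc 1 k = Finset.Ioc 0 k := by ext x; simp; omega
    rw [he]
    exact Finset.sum_Ioc_consecutive _ (Nat.zero_le N₀) hN₀k
  rw [← hsplit]
  -- bound the first sum
  have hb1 : ∑ r ∈ Finset.Ioc 0 N₀, γ ^ (k - r) * α (r - 1) ≤ (N₀ : ℝ) * α 0 * γ ^ (k - N₀) := by
    have : ∀ r ∈ Finset.Ioc 0 N₀, γ ^ (k - r) * α (r - 1) ≤ γ ^ (k - N₀) * α 0 := by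
      intro r hr
      rw [Finset.mem_Ioc] at hr
      have h1 : γ ^ (k - r) ≤ γ ^ (k - N₀) :=
        pow_le_pow_of_le_one hγ.le hγ1.le (Nat.sub_le_sub_left hr.2 k)
      exact mul_le_mul h1 (hanti _) (hαpos _).le (pow_nonneg hγ.le _)
    calc ∑ r ∈ Finset.Ioc 0 N₀, γ ^ (k - r) * α (r - 1)
        ≤ ∑ _r ∈ Finset.Ioc 0 N₀, γ ^ (k - N₀) * α 0 := Finset.sum_le_sum this
      _ = (N₀ : ℝ) * (γ ^ (k - N₀) * α 0) := by
          rw [Finset.sum_const, Nat.card_Ioc]; simp [nsmul_eq_mul]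
      _ = (N₀ : ℝ) * α 0 * γ ^ (k - N₀) := by ring
  have hb1' : (N₀ : ℝ) * α 0 * γ ^ (k - N₀) < ε / 4 := by
    have hm : N₁ ≤ k - N₀ := by omega
    have := hN₁ (k - N₀) hm
    rw [Real.dist_eq, sub_zero] at this
    calc (N₀ : ℝ) * α 0 * γ ^ (k - N₀) ≤ |(N₀ : ℝ) * α 0 * γ ^ (k - N₀)| := le_abs_self _
      _ < ε / 4 := this
  -- bound the second sum
  have hgeo : ∑ r ∈ Finset.Ioc N₀ k, γ ^ (k - r) ≤ (1 - γ)⁻¹ := by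
    have hre : ∑ r ∈ Finset.Ioc N₀ k, γ ^ (k - r) = ∑ j ∈ Finset.range (k - N₀), γ ^ j := by
      have he : Finset.Ioc N₀ k = Finset.Ico (N₀ + 1) (k + 1) := by ext x; simp
      rw [he, Finset.sum_Ico_eq_sum_range]
      have hcard : k + 1 - (N₀ + 1) = k - N₀ := by omega
      rw [hcard, ← Finset.sum_range_reflect (fun j => γ ^ j) (k - N₀)]
      apply Finset.sum_congr rfl
      intro j hj
      rw [Finset.mem_range] at hj
      congr 1
      omega
    rw [hre]
    have := Summable.sum_le_tsum (Finset.range (k - N₀)) (fun i _ => pow_nonneg hγ.le i)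
      (summable_geometric_of_lt_one hγ.le hγ1)
    rwa [tsum_geometric_of_lt_one hγ.le hγ1] at this
  have hb2 : ∑ r ∈ Finset.Ioc N₀ k, γ ^ (k - r) * α (r - 1) ≤ ε / 4 := by
    have hstep : ∀ r ∈ Finset.Ioc N₀ k, γ ^ (k - r) * α (r - 1) ≤ γ ^ (k - r) * (ε * (1 - γ) / 4) := by
      intro r hr
      rw [Finset.mem_Ioc] at hr
      have : N₀ ≤ r - 1 := by omega
      exact mul_le_mul_of_nonneg_left (hαsmall _ this) (pow_nonneg hγ.le _)
    calc ∑ r ∈ Finset.Ioc N₀ k, γ ^ (k - r) * α (r - 1)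
        ≤ ∑ r ∈ Finset.Ioc N₀ k, γ ^ (k - r) * (ε * (1 - γ) / 4) := Finset.sum_le_sum hstep
      _ = (∑ r ∈ Finset.Ioc N₀ k, γ ^ (k - r)) * (ε * (1 - γ) / 4) := by
          rw [Finset.sum_mul]
      _ ≤ (1 - γ)⁻¹ * (ε * (1 - γ) / 4) := by
          apply mul_le_mul_of_nonneg_right hgeo (by positivity)
      _ = ε / 4 := by field_simp
  calc ∑ r ∈ Finset.Ioc 0 N₀, γ ^ (k - r) * α (r - 1) +
      ∑ r ∈ Finset.Ioc N₀ k, γ ^ (k - r) * α (r - 1)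
      < ε / 4 + ε / 4 := by
        apply add_lt_add_of_lt_of_le (lt_of_le_of_lt hb1 hb1') hb2
    _ < ε := by linarith

theorem stmt_14 (n s : ℕ) (hn : 0 < n)
    (M Pi : Matrix (Fin (2 * n)) (Fin (2 * n)) ℝ)
    (hPi : ∀ i j : Fin (2 * n), Pi i j = if (i : ℕ) < n then 1 / (n : ℝ) else 0)
    (Γ γ : ℝ) (hΓ : 0 < Γ) (hγ : 0 < γ) (hγ1 : γ < 1)
    (hM : ∀ (k : ℕ) (i j : Fin (2 * n)), |(M ^ k - Pi) i j| ≤ Γ * γ ^ k)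
    (α : ℕ → ℝ) (hαpos : ∀ k, 0 < α k) (hαmono : ∀ k, α (k + 1) ≤ α k)
    (hα0 : Filter.Tendsto α Filter.atTop (nhds 0))
    (g Z : ℕ → Fin (2 * n) → EuclideanSpace ℝ (Fin s))
    (D : ℝ) (hD : 0 < D) (hgD : ∀ k i, ‖g k i‖ ≤ D)
    (hglow : ∀ (k : ℕ) (i : Fin (2 * n)), n ≤ (i : ℕ) → ‖g k i‖ ≤ (α k) ^ (-(1 / 4 : ℝ)))
    (hZ : ∀ (k : ℕ) (i : Fin (2 * n)),
      Z k i = (∑ j, (M ^ k) i j • Z 0 j) -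
        ∑ r ∈ Finset.Icc 1 k, α (r - 1) • ∑ j, (M ^ (k - r)) i j • g (r - 1) j) :
    ∀ i : Fin (2 * n), n ≤ (i : ℕ) →
      Filter.Tendsto (fun k => Z k i) Filter.atTop (nhds 0) := by
  intro i hi
  have hPi0 : ∀ j, Pi i j = 0 := fun j => by
    rw [hPi i j, if_neg (not_lt.mpr hi)]
  have hMk : ∀ (k : ℕ) (j : Fin (2 * n)), |(M ^ k) i j| ≤ Γ * γ ^ k := by
    intro k j
    have := hM k i j
    rwa [Matrix.sub_apply, hPi0 j, sub_zero] at this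
  set B₀ : ℝ := ∑ j, ‖Z 0 j‖ with hB₀
  set T : ℕ → ℝ := fun k => ∑ r ∈ Finset.Icc 1 k, γ ^ (k - r) * α (r - 1) with hT
  have hbound : ∀ k, ‖Z k i‖ ≤ Γ * γ ^ k * B₀ + (2 * n : ℝ) * Γ * D * T k := by
    intro k
    rw [hZ k i]
    refine le_trans (norm_sub_le _ _) (add_le_add ?_ ?_)
    · calc ‖∑ j, (M ^ k) i j • Z 0 j‖ ≤ ∑ j, ‖(M ^ k) i j • Z 0 j‖ := norm_sum_le _ _
        _ ≤ ∑ j, Γ * γ ^ k * ‖Z 0 j‖ := by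
            apply Finset.sum_le_sum
            intro j _
            rw [norm_smul, Real.norm_eq_abs]
            exact mul_le_mul_of_nonneg_right (hMk k j) (norm_nonneg _)
        _ = Γ * γ ^ k * B₀ := by rw [hB₀, Finset.mul_sum]
    · calc ‖∑ r ∈ Finset.Icc 1 k, α (r - 1) • ∑ j, (M ^ (k - r)) i j • g (r - 1) j‖
          ≤ ∑ r ∈ Finset.Icc 1 k, ‖α (r - 1) • ∑ j, (M ^ (k - r)) i j • g (r - 1) j‖ :=
            norm_sum_le _ _
        _ ≤ ∑ r ∈ Finset.Icc 1 k, (2 * n : ℝ) * Γ * D * (γ ^ (k - r) * α (r - 1)) := by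
            apply Finset.sum_le_sum
            intro r _
            rw [norm_smul, Real.norm_eq_abs, abs_of_pos (hαpos _)]
            have hin : ‖∑ j, (M ^ (k - r)) i j • g (r - 1) j‖ ≤ (2 * n : ℝ) * (Γ * γ ^ (k - r) * D) := by
              calc ‖∑ j, (M ^ (k - r)) i j • g (r - 1) j‖
                  ≤ ∑ j, ‖(M ^ (k - r)) i j • g (r - 1) j‖ := norm_sum_le _ _
                _ ≤ ∑ _j : Fin (2 * n), Γ * γ ^ (k - r) * D := by
                    apply Finset.sum_le_sum
                    intro j _
                    rw [norm_smul, Real.norm_eq_abs]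
                    exact mul_le_mul (hMk _ j) (hgD _ j) (norm_nonneg _)
                      (mul_nonneg hΓ.le (pow_nonneg hγ.le _))
                _ = (2 * n : ℝ) * (Γ * γ ^ (k - r) * D) := by
                    rw [Finset.sum_const, Finset.card_univ, Fintype.card_fin, nsmul_eq_mul]
                    push_cast
                    ring
            calc α (r - 1) * ‖∑ j, (M ^ (k - r)) i j • g (r - 1) j‖
                ≤ α (r - 1) * ((2 * n : ℝ) * (Γ * γ ^ (k - r) * D)) :=
                  mul_le_mul_of_nonneg_left hin (hαpos _).le
              _ = (2 * n : ℝ) * Γ * D * (γ ^ (k - r) * α (r - 1)) := by ring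
        _ = (2 * n : ℝ) * Γ * D * T k := by rw [hT, Finset.mul_sum]
  have hlim : Tendsto (fun k => Γ * γ ^ k * B₀ + (2 * n : ℝ) * Γ * D * T k) atTop (nhds 0) := by
    have h1 : Tendsto (fun k => Γ * γ ^ k * B₀) atTop (nhds 0) := by
      have := (tendsto_pow_atTop_nhds_zero_of_lt_one hγ.le hγ1).const_mul Γ
      simpa using this.mul_const B₀
    have h2 : Tendsto (fun k => (2 * n : ℝ) * Γ * D * T k) atTop (nhds 0) := by
      have := (aux_conv γ hγ hγ1 α hαpos hαmono hα0).const_mul ((2 * n : ℝ) * Γ * D)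
      simpa using this
    simpa using h1.add h2
  rw [tendsto_zero_iff_norm_tendsto_zero]
  exact squeeze_zero (fun k => norm_nonneg _) hbound hlim
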